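/- Let w be a word having s Abelian periods (h₁,p₁) < (h₂,p₂) < ⋯ < (h_s,p_s) (in the order: (h,p) < (h',p') iff p < p' or (p = p' and h < h')) all with the same positive tail length t, i.e., (|w| - h_i) mod p_i = t > 0 for all i. Then for any letter a, if (h₁,p₁) is an Abelian period of wa, then (h₂,p₂), …, (h_s,p_s) are also Abelian periods of wa. -/

import Mathlib

/-- A word `w` has Abelian period `(h, p)` if `w = u₀u₁⋯u_{k-1}u_k` where `|u₀| = h`,
all the middle blocks `u₁, …, u_{k-1}` have length `p` and the same Parikh vector,
the Parikh vectors of the head `u₀` and the tail `u_k` are contained in that common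
Parikh vector, `h < p`, there is at least one middle block, and the tail has length
`< p`. -/
def HasAbelianPeriod {α : Type*} [DecidableEq α] (w : List α) (h p : ℕ) : Prop :=
  h < p ∧ ∃ (u0 : List α) (us : List (List α)) (uk : List α),
    w = u0 ++ us.flatten ++ uk ∧
    u0.length = h ∧
    us ≠ [] ∧
    (∀ u ∈ us, u.length = p) ∧
    (∀ u ∈ us, ∀ v ∈ us, ∀ a : α, u.count a = v.count a) ∧
    (∀ u ∈ us, ∀ a : α, u0.count a ≤ u.count a) ∧
    (∀ u ∈ us, ∀ a : α, uk.count a ≤ u.count a) ∧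
    uk.length < p

private lemma concat_of_ne_nil {β : Type*} {us : List β} (h : us ≠ []) :
    ∃ l B, us = l ++ [B] :=
  ⟨us.dropLast, us.getLast h, (List.dropLast_append_getLast h).symm⟩

private lemma suffix_append_right_cancel {β : Type*} {l1 l2 l : List β}
    (h : l1 ++ l <:+ l2 ++ l) : l1 <:+ l2 := by
  obtain ⟨s, hs⟩ := h
  refine ⟨s, ?_⟩
  have : (s ++ l1) ++ l = l2 ++ l := by simpa using hs
  exact List.append_cancel_right this

private lemma flatten_len {β : Type*} {us : List (List β)} {p : ℕ}
    (h : ∀ u ∈ us, u.length = p) : us.flatten.length = us.length * p := by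
  induction us with
  | nil => simp
  | cons u t ih =>
    simp only [List.flatten_cons, List.length_append, List.length_cons]
    rw [ih (fun v hv => h v (by simp [hv])), h u (by simp)]
    ring

private lemma mul_add_mod' (a b c : ℕ) : (a * b + c) % b = c % b := by
  rw [Nat.add_comm, Nat.add_mul_mod_self_right]

private lemma count_eq_of_le_of_len {α : Type*} [DecidableEq α] {l1 l2 : List α}
    (hle : ∀ c, l1.count c ≤ l2.count c) (hlen : l1.length = l2.length) :
    ∀ c, l1.count c = l2.count c := by
  have h : (l1 : Multiset α) ≤ (l2 : Multiset α) := by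
    rw [Multiset.le_iff_count]; intro c; simpa using hle c
  have he : (l1 : Multiset α) = (l2 : Multiset α) :=
    Multiset.eq_of_le_of_card_le h (by simpa using hlen.ge)
  intro c
  simpa using congrArg (Multiset.count c) he

/-- Let `w` have `s` Abelian periods `(h₁,p₁) < (h₂,p₂) < ⋯ < (h_s,p_s)`
(in the order `(h,p) < (h',p')` iff `p < p'` or (`p = p'` and `h < h'`)), all with the
same positive tail length `t`, i.e. `(|w| - hᵢ) % pᵢ = t > 0` for all `i`. Then for any
letter `a`, if `(h₁,p₁)` is an Abelian period of `w·a`, then every `(hᵢ,pᵢ)` is an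
Abelian period of `w·a`. -/
theorem heap_proposition {α : Type*} [DecidableEq α]
    (w : List α) (s t : ℕ) (hs : 0 < s)
    (hseq pseq : Fin s → ℕ)
    (horder : ∀ i j : Fin s, i < j →
      pseq i < pseq j ∨ (pseq i = pseq j ∧ hseq i < hseq j))
    (hper : ∀ i : Fin s, HasAbelianPeriod w (hseq i) (pseq i))
    (ht : 0 < t)
    (htail : ∀ i : Fin s, (w.length - hseq i) % pseq i = t)
    (a : α)
    (hfirst : HasAbelianPeriod (w ++ [a]) (hseq ⟨0, hs⟩) (pseq ⟨0, hs⟩)) :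
    ∀ i : Fin s, HasAbelianPeriod (w ++ [a]) (hseq i) (pseq i) := by
  intro i
  set i0 : Fin s := ⟨0, hs⟩ with hi0
  -- decomposition of w for period i
  obtain ⟨hpi, u0, us0, uk, hw, hu0len, husne, hublen, hucnt, hheadle, htaille, huklt⟩ := hper i
  obtain ⟨l, B, rfl⟩ := concat_of_ne_nil husne
  have hBmem : B ∈ l ++ [B] := by simp
  have hBlen : B.length = pseq i := hublen B hBmem
  have hwlen : w.length = hseq i + (l.length + 1) * pseq i + uk.length := by
    have h := congrArg List.length hw
    simp only [List.length_append] at h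
    rw [flatten_len hublen, hu0len] at h
    simp only [List.length_append, List.length_cons, List.length_nil] at h
    linarith [h]
  have hukt : uk.length = t := by
    have h2 := htail i
    rw [hwlen, show hseq i + (l.length + 1) * pseq i + uk.length - hseq i
        = (l.length + 1) * pseq i + uk.length from by omega,
      mul_add_mod', Nat.mod_eq_of_lt huklt] at h2
    exact h2
  have htlt : t < pseq i := hukt ▸ huklt
  have huksuf : uk <:+ w := ⟨u0 ++ (l ++ [B]).flatten, hw.symm⟩
  have hBsuf : B ++ uk <:+ w := ⟨u0 ++ l.flatten, by rw [hw]; simp [List.flatten_append]⟩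
  -- decomposition of w for period i0 (lengths only)
  obtain ⟨hp1, w0, ws, wk, hw1, hw0len, hwsne, hwblen, -, -, -, hwklt⟩ := hper i0
  have hwlen1 : w.length = hseq i0 + ws.length * pseq i0 + wk.length := by
    have h := congrArg List.length hw1
    simp only [List.length_append] at h
    rw [flatten_len hwblen, hw0len] at h
    linarith [h]
  have hwkt : wk.length = t := by
    have h2 := htail i0
    rw [hwlen1, show hseq i0 + ws.length * pseq i0 + wk.length - hseq i0
        = ws.length * pseq i0 + wk.length from by omega,
      mul_add_mod', Nat.mod_eq_of_lt hwklt] at h2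
    exact h2
  have htlt1 : t < pseq i0 := hwkt ▸ hwklt
  have hp1pos : 0 < pseq i0 := lt_of_le_of_lt (Nat.zero_le t) htlt1
  have hp1le : pseq i0 ≤ pseq i := by
    rcases Nat.eq_zero_or_pos i.val with h0 | h0
    · have : i0 = i := Fin.ext (by simp [hi0, h0])
      exact le_of_eq (congrArg pseq this)
    · rcases horder i0 i (by simpa [hi0, Fin.lt_def] using h0) with h | h
      · exact le_of_lt h
      · exact le_of_eq h.1
  -- decomposition of (w ++ [a]) for period i0
  obtain ⟨-, v0, vs, vk, hva, hv0len, hvsne, hvblen, hvcnt, -, hvtaille, hvklt⟩ := hfirst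
  have hvalen : w.length + 1 = hseq i0 + vs.length * pseq i0 + vk.length := by
    have h := congrArg List.length hva
    simp only [List.length_append, List.length_cons, List.length_nil] at h
    rw [flatten_len hvblen, hv0len] at h
    linarith [h]
  have hkeyeq : ws.length * pseq i0 + (t + 1) = vs.length * pseq i0 + vk.length := by
    rw [hwkt] at hwlen1
    linarith [hwlen1, hvalen]
  have huka : uk ++ [a] <:+ w ++ [a] := by
    obtain ⟨s1, hs1⟩ := huksuf
    exact ⟨s1, by rw [← List.append_assoc, hs1]⟩
  -- the key fact: a block of w, of length `pseq i0`, ending right before the tail,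
  -- dominating the Parikh vector of `uk ++ [a]`
  have key : ∃ C, C.length = pseq i0 ∧ C ++ uk <:+ w ∧
      ∀ c, (uk ++ [a]).count c ≤ C.count c := by
    rcases Nat.lt_or_ge (t + 1) (pseq i0) with hA | hB
    · -- the tail of w ++ [a] is uk ++ [a]
      have hvkt : vk.length = t + 1 := by
        have h := congrArg (· % pseq i0) hkeyeq
        simp only [mul_add_mod'] at h
        rw [Nat.mod_eq_of_lt hA, Nat.mod_eq_of_lt hvklt] at h
        exact h.symm
      have hvksuf : vk <:+ w ++ [a] := ⟨v0 ++ vs.flatten, hva.symm⟩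
      have hveq : vk = uk ++ [a] := by
        have hle : vk.length ≤ (uk ++ [a]).length := by simp [hvkt, hukt]
        exact List.IsSuffix.eq_of_length
          (List.suffix_of_suffix_length_le hvksuf huka hle) (by simp [hvkt, hukt])
      obtain ⟨m, C, rfl⟩ := concat_of_ne_nil hvsne
      have hCmem : C ∈ m ++ [C] := by simp
      refine ⟨C, hvblen C hCmem, ?_, ?_⟩
      · have hCsuf : (C ++ uk) ++ [a] <:+ w ++ [a] := by
          refine ⟨v0 ++ m.flatten, ?_⟩
          rw [hva, hveq]
          simp [List.flatten_append]
        exact suffix_append_right_cancel hCsuf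
      · intro c
        have h := hvtaille C hCmem c
        rwa [hveq] at h
    · -- the tail of w ++ [a] is empty; the last block is uk ++ [a]
      have hBeq : t + 1 = pseq i0 := le_antisymm htlt1 hB
      have hvk0 : vk.length = 0 := by
        have h := congrArg (· % pseq i0) hkeyeq
        simp only [mul_add_mod'] at h
        rw [hBeq, Nat.mod_self, Nat.mod_eq_of_lt hvklt] at h
        exact h.symm
      have hvknil : vk = [] := List.eq_nil_of_length_eq_zero hvk0
      subst hvknil
      simp only [List.length_nil] at hkeyeq
      have hvslen : vs.length = ws.length + 1 := by
        apply Nat.eq_of_mul_eq_mul_right hp1pos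
        have h3 : (ws.length + 1) * pseq i0 = ws.length * pseq i0 + pseq i0 := by ring
        linarith [hkeyeq, hBeq, h3]
      obtain ⟨m1, C, rfl⟩ := concat_of_ne_nil hvsne
      have hm1ne : m1 ≠ [] := by
        intro hn
        subst hn
        simp only [List.nil_append, List.length_cons, List.length_nil] at hvslen
        exact hwsne (List.eq_nil_of_length_eq_zero (by omega))
      obtain ⟨m2, D, rfl⟩ := concat_of_ne_nil hm1ne
      have hCmem : C ∈ (m2 ++ [D]) ++ [C] := by simp
      have hDmem : D ∈ (m2 ++ [D]) ++ [C] := by simp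
      have hCsuf : C <:+ w ++ [a] :=
        ⟨v0 ++ (m2 ++ [D]).flatten, by rw [hva]; simp [List.flatten_append]⟩
      have hClen : C.length = pseq i0 := hvblen C hCmem
      have hCeq : C = uk ++ [a] := by
        apply List.IsSuffix.eq_of_length
          (List.suffix_of_suffix_length_le hCsuf huka (by simp [hClen, hukt, ← hBeq]))
        simp [hClen, hukt, ← hBeq]
      refine ⟨D, hvblen D hDmem, ?_, ?_⟩
      · have hDsuf : (D ++ uk) ++ [a] <:+ w ++ [a] := by
          refine ⟨v0 ++ m2.flatten, ?_⟩
          rw [hva, hCeq]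
          simp [List.flatten_append]
        exact suffix_append_right_cancel hDsuf
      · intro c
        have h := hvcnt C hCmem D hDmem c
        rw [hCeq] at h
        exact le_of_eq h
  obtain ⟨C, hClen, hCsufw, hCcnt⟩ := key
  have hCB : C <:+ B := by
    apply suffix_append_right_cancel (l := uk)
    exact List.suffix_of_suffix_length_le hCsufw hBsuf
      (by simp only [List.length_append, hClen, hBlen]; omega)
  have hkeyB : ∀ c, (uk ++ [a]).count c ≤ B.count c :=
    fun c => le_trans (hCcnt c) (hCB.sublist.count_le c)
  -- now build the decomposition of w ++ [a] for period i
  rcases Nat.lt_or_ge (t + 1) (pseq i) with hc | hc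
  · -- new tail is uk ++ [a]
    refine ⟨hpi, u0, l ++ [B], uk ++ [a], ?_, hu0len, husne, hublen, hucnt, hheadle, ?_, ?_⟩
    · rw [hw]; simp [List.append_assoc]
    · intro u hu c
      calc (uk ++ [a]).count c ≤ B.count c := hkeyB c
        _ = u.count c := hucnt B hBmem u hu c
    · simp only [List.length_append, List.length_cons, List.length_nil, hukt]
      omega
  · -- new tail is empty; uk ++ [a] becomes a full block
    have hceq : t + 1 = pseq i := le_antisymm htlt hc
    have hnewlen : (uk ++ [a]).length = pseq i := by
      simp only [List.length_append, List.length_cons, List.length_nil, hukt]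
      omega
    have heqc : ∀ c, (uk ++ [a]).count c = B.count c :=
      count_eq_of_le_of_len hkeyB (by rw [hnewlen, hBlen])
    have med : ∀ u ∈ (l ++ [B]) ++ [uk ++ [a]], ∀ c, u.count c = B.count c := by
      intro u hu c
      rcases List.mem_append.mp hu with h | h
      · exact hucnt u h B hBmem c
      · simp only [List.mem_singleton] at h
        subst h
        exact heqc c
    refine ⟨hpi, u0, (l ++ [B]) ++ [uk ++ [a]], [], ?_, hu0len, by simp, ?_, ?_, ?_, ?_, ?_⟩
    · rw [hw]; simp [List.flatten_append]
    · intro u hu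
      rcases List.mem_append.mp hu with h | h
      · exact hublen u h
      · simp only [List.mem_singleton] at h
        subst h
        exact hnewlen
    · intro u hu v hv c
      rw [med u hu c, med v hv c]
    · intro u hu c
      rw [med u hu c]
      exact hheadle B hBmem c
    · intro u hu c
      simp
    · simpa using lt_of_le_of_lt (Nat.zero_le _) hpi
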